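/- A bicomplex matrix A ∈ 𝔹ℂ^{n×n} is hyperbolic positive if and only if there exist r ∈ ℕ and bicomplex column vectors a₁, …, a_r ∈ 𝔹ℂ^{n×1}, which may moreover be chosen pairwise orthogonal with respect to the 𝔻-valued inner product, such that A = Σ_{i=1}^{r} aᵢ·(aᵢ*)ᵗ. -/

import Mathlib

open Complex Matrix Kronecker BigOperators

open scoped ComplexOrder

/-- Bicomplex numbers, modeled as pairs `(z₁, z₂) ∈ ℂ × ℂ` representing `z₁ + j z₂`.
Addition is the componentwise (Prod) addition. -/
abbrev BC : Type := ℂ × ℂ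

noncomputable section

/-- Bicomplex multiplication: `(z₁,z₂)·(w₁,w₂) = (z₁w₁ − z₂w₂, z₁w₂ + z₂w₁)`. -/
def bcMul (z w : BC) : BC := (z.1 * w.1 - z.2 * w.2, z.1 * w.2 + z.2 * w.1)

/-- The `*`-conjugate `Z* = conj z₁ − j conj z₂`. -/
def bcStar (z : BC) : BC := ((starRingEnd ℂ) z.1, -((starRingEnd ℂ) z.2))

/-- First idempotent component `λ₁ = z₁ − i z₂`. -/
def idem1 (z : BC) : ℂ := z.1 - Complex.I * z.2

/-- Second idempotent component `λ₂ = z₁ + i z₂`. -/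
def idem2 (z : BC) : ℂ := z.1 + Complex.I * z.2

/-- Membership in `𝔻⁺`: both idempotent components are nonnegative real numbers. -/
def inDplus (z : BC) : Prop :=
  (idem1 z).im = 0 ∧ 0 ≤ (idem1 z).re ∧ (idem2 z).im = 0 ∧ 0 ≤ (idem2 z).re

/-- A bicomplex matrix `A = A₁ + j A₂` is a pair of complex matrices. -/
abbrev BCMat (I J : Type) : Type := Matrix I J ℂ × Matrix I J ℂ

/-- Bicomplex matrix multiplication, induced by bicomplex multiplication. -/
def bmul {I J K : Type} [Fintype J] (A : BCMat I J) (B : BCMat J K) : BCMat I K :=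
  (A.1 * B.1 - A.2 * B.2, A.1 * B.2 + A.2 * B.1)

/-- `(A*)ᵗ`: the entrywise `*`-conjugate followed by transpose. -/
def bcStarT {I J : Type} (A : BCMat I J) : BCMat J I := (A.1ᴴ, -(A.2ᴴ))

/-- The `(j,k)` entry of a bicomplex matrix, as a bicomplex number. -/
def bcEntry {I J : Type} (A : BCMat I J) (j : I) (k : J) : BC := (A.1 j k, A.2 j k)

/-- First idempotent component `𝒜₁ = A₁ − i A₂` of a bicomplex matrix. -/
def midem1 {I J : Type} (A : BCMat I J) : Matrix I J ℂ := A.1 - Complex.I • A.2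

/-- Second idempotent component `𝒜₂ = A₁ + i A₂` of a bicomplex matrix. -/
def midem2 {I J : Type} (A : BCMat I J) : Matrix I J ℂ := A.1 + Complex.I • A.2

/-- The bicomplex number `(c*)ᵗ · A · c`. -/
def quadForm {I : Type} [Fintype I] (A : BCMat I I) (c : I → BC) : BC :=
  ∑ j, ∑ k, bcMul (bcStar (c j)) (bcMul (bcEntry A j k) (c k))

/-- `A` is hyperbolic positive if `(c*)ᵗ · A · c ∈ 𝔻⁺` for every bicomplex vector `c`. -/
def HypPos {I : Type} [Fintype I] (A : BCMat I I) : Prop :=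
  ∀ c : I → BC, inDplus (quadForm A c)

/-- Bicomplex trace `Tr(A) = Tr(A₁) + j Tr(A₂)`. -/
def bcTrace {I : Type} [Fintype I] (A : BCMat I I) : BC := (A.1.trace, A.2.trace)

/-- The bicomplex tensor product
`A ⊗ⱼ B = (A₁⊗B₁ − A₂⊗B₂) + j (A₁⊗B₂ + A₂⊗B₁)`. -/
def bkron {I J K L : Type} (A : BCMat I J) (B : BCMat K L) : BCMat (I × K) (J × L) :=
  (A.1 ⊗ₖ B.1 - A.2 ⊗ₖ B.2, A.1 ⊗ₖ B.2 + A.2 ⊗ₖ B.1)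

end

noncomputable section

/-- The `𝔻`-valued inner product `⟨X,Y⟩_𝔻 = Σ_k (X k)* · (Y k)`. -/
def bcDinner {I : Type} [Fintype I] (X Y : I → BC) : BC :=
  ∑ k, bcMul (bcStar (X k)) (Y k)

/-- The bicomplex rank-one matrix `a · (a*)ᵗ`. -/
def bcOuter {I : Type} (a : I → BC) : BCMat I I :=
  (Matrix.of fun j k => (bcMul (a j) (bcStar (a k))).1,
   Matrix.of fun j k => (bcMul (a j) (bcStar (a k))).2)


lemma psd_decomp {n : ℕ} {M : Matrix (Fin n) (Fin n) ℂ} (hM : M.PosSemidef) :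
    ∃ u : Fin n → (Fin n → ℂ), (∀ i j, i ≠ j → star (u i) ⬝ᵥ u j = 0) ∧
      ∀ j k, M j k = ∑ i, u i j * (starRingEnd ℂ) (u i k) := by
  set U : Matrix (Fin n) (Fin n) ℂ := (hM.1.eigenvectorUnitary : Matrix (Fin n) (Fin n) ℂ) with hUdef
  have hU : Uᴴ * U = 1 := by
    simpa [star] using Unitary.coe_star_mul_self hM.1.eigenvectorUnitary
  refine ⟨fun i j => (Real.sqrt (hM.1.eigenvalues i) : ℂ) * U j i, ?_, ?_⟩
  · intro i j hij
    have h1 : (Uᴴ * U) i j = 0 := by simp [hU, Matrix.one_apply, hij]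
    have h2 : ∑ k, (starRingEnd ℂ) (U k i) * U k j = 0 := by
      simpa [Matrix.mul_apply, Matrix.conjTranspose_apply] using h1
    simp only [dotProduct, Pi.star_apply, star_mul', RCLike.star_def]
    calc ∑ k, ((starRingEnd ℂ) (Real.sqrt (hM.1.eigenvalues i) : ℂ) * (starRingEnd ℂ) (U k i)) *
          ((Real.sqrt (hM.1.eigenvalues j) : ℂ) * U k j)
        = ((starRingEnd ℂ) (Real.sqrt (hM.1.eigenvalues i) : ℂ) *
            (Real.sqrt (hM.1.eigenvalues j) : ℂ)) * ∑ k, (starRingEnd ℂ) (U k i) * U k j := by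
          rw [Finset.mul_sum]; congr 1; ext k; ring
      _ = 0 := by rw [h2, mul_zero]
  · intro j k
    have hs : M = U * Matrix.diagonal (RCLike.ofReal ∘ hM.1.eigenvalues) * Uᴴ := by
      simpa [← hUdef, Matrix.star_eq_conjTranspose] using hM.1.spectral_theorem
    conv_lhs => rw [hs]
    rw [Matrix.mul_apply]
    refine Finset.sum_congr rfl fun i _ => ?_
    rw [Matrix.mul_apply, Finset.sum_eq_single i (by
      intro b _ hb; simp [Matrix.diagonal_apply_ne _ hb]) (by simp)]
    have hnn := hM.eigenvalues_nonneg i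
    have hcast : (RCLike.ofReal (hM.1.eigenvalues i) : ℂ) = (Real.sqrt (hM.1.eigenvalues i) : ℂ) *
        (Real.sqrt (hM.1.eigenvalues i) : ℂ) := by
      rw [← Complex.ofReal_mul, Real.mul_self_sqrt hnn]; norm_cast
    simp only [Matrix.diagonal_apply_eq, Function.comp_apply, Matrix.conjTranspose_apply,
      RCLike.star_def, _root_.map_mul, Complex.conj_ofReal, hcast]
    ring

lemma idem1_bcMul (z w : BC) : idem1 (bcMul z w) = idem1 z * idem1 w := by
  simp only [idem1, bcMul]; linear_combination (-(z.2 * w.2)) * Complex.I_sq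

lemma idem2_bcMul (z w : BC) : idem2 (bcMul z w) = idem2 z * idem2 w := by
  simp only [idem2, bcMul]; linear_combination (-(z.2 * w.2)) * Complex.I_sq

lemma idem1_bcStar (z : BC) : idem1 (bcStar z) = (starRingEnd ℂ) (idem1 z) := by
  simp only [idem1, bcStar, map_sub, _root_.map_mul, Complex.conj_I]; ring

lemma idem2_bcStar (z : BC) : idem2 (bcStar z) = (starRingEnd ℂ) (idem2 z) := by
  simp only [idem2, bcStar, map_add, _root_.map_mul, Complex.conj_I]; ring

lemma bc_eq_of_idem {z w : BC} (h1 : idem1 z = idem1 w) (h2 : idem2 z = idem2 w) : z = w := by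
  simp only [idem1, idem2] at h1 h2
  have hz2 : Complex.I * z.2 = Complex.I * w.2 := by linear_combination (h2 - h1) / 2
  have hz2' : z.2 = w.2 := mul_left_cancel₀ Complex.I_ne_zero hz2
  have hz1 : z.1 = w.1 := by linear_combination (h1 + h2) / 2
  exact Prod.ext hz1 hz2'

lemma idem1_sum {α : Type*} (s : Finset α) (f : α → BC) :
    idem1 (∑ x ∈ s, f x) = ∑ x ∈ s, idem1 (f x) := by
  simp only [idem1, Prod.fst_sum, Prod.snd_sum, Finset.mul_sum, Finset.sum_sub_distrib]

lemma idem2_sum {α : Type*} (s : Finset α) (f : α → BC) :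
    idem2 (∑ x ∈ s, f x) = ∑ x ∈ s, idem2 (f x) := by
  simp only [idem2, Prod.fst_sum, Prod.snd_sum, Finset.mul_sum, Finset.sum_add_distrib]

lemma idem1_bcEntry {I J : Type} (A : BCMat I J) (j : I) (k : J) :
    idem1 (bcEntry A j k) = midem1 A j k := by
  simp [idem1, bcEntry, midem1]

lemma idem2_bcEntry {I J : Type} (A : BCMat I J) (j : I) (k : J) :
    idem2 (bcEntry A j k) = midem2 A j k := by
  simp [idem2, bcEntry, midem2]

lemma idem1_quadForm {m : ℕ} (A : BCMat (Fin m) (Fin m)) (c : Fin m → BC) :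
    idem1 (quadForm A c) =
      star (fun k => idem1 (c k)) ⬝ᵥ (midem1 A *ᵥ fun k => idem1 (c k)) := by
  rw [quadForm, idem1_sum]
  simp only [idem1_sum, idem1_bcMul, idem1_bcStar, idem1_bcEntry, dotProduct,
    Matrix.mulVec, Pi.star_apply, RCLike.star_def, Finset.mul_sum]

lemma idem2_quadForm {m : ℕ} (A : BCMat (Fin m) (Fin m)) (c : Fin m → BC) :
    idem2 (quadForm A c) =
      star (fun k => idem2 (c k)) ⬝ᵥ (midem2 A *ᵥ fun k => idem2 (c k)) := by
  rw [quadForm, idem2_sum]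
  simp only [idem2_sum, idem2_bcMul, idem2_bcStar, idem2_bcEntry, dotProduct,
    Matrix.mulVec, Pi.star_apply, RCLike.star_def, Finset.mul_sum]

lemma hermitian_of_im_zero {m : ℕ} (M : Matrix (Fin m) (Fin m) ℂ)
    (h : ∀ x : Fin m → ℂ, (star x ⬝ᵥ (M *ᵥ x)).im = 0) : M.IsHermitian := by
  have key : ∀ u v : Fin m → ℂ,
      star u ⬝ᵥ (M *ᵥ v) = (starRingEnd ℂ) (star v ⬝ᵥ (M *ᵥ u)) := by
    intro u v
    set a := star u ⬝ᵥ (M *ᵥ v) with ha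
    set b := star v ⬝ᵥ (M *ᵥ u) with hb
    have e1 : (star (u + v) ⬝ᵥ (M *ᵥ (u + v))) =
        star u ⬝ᵥ (M *ᵥ u) + a + b + star v ⬝ᵥ (M *ᵥ v) := by
      simp only [star_add, Matrix.mulVec_add, add_dotProduct, dotProduct_add,
        ha, hb]
      ring
    have e2 : (star (u + Complex.I • v) ⬝ᵥ (M *ᵥ (u + Complex.I • v))) =
        star u ⬝ᵥ (M *ᵥ u) + star v ⬝ᵥ (M *ᵥ v) + Complex.I * a - Complex.I * b := by
      simp only [star_add, star_smul, Matrix.mulVec_add, Matrix.mulVec_smul,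
        add_dotProduct, dotProduct_add, smul_dotProduct,
        dotProduct_smul, neg_dotProduct, ha, hb, RCLike.star_def,
        Complex.conj_I, smul_eq_mul, neg_mul, neg_smul]
      linear_combination (-(star v ⬝ᵥ (M *ᵥ v))) * Complex.I_sq
    have h1 : (a + b).im = 0 := by
      have := h (u + v)
      rw [e1] at this
      simp only [Complex.add_im] at this ⊢
      have hu := h u; have hv := h v
      linarith
    have h2 : (a - b).re = 0 := by
      have := h (u + Complex.I • v)
      rw [e2] at this
      have hu := h u; have hv := h v
      simp only [Complex.sub_im, Complex.add_im, Complex.mul_im, Complex.I_re, Complex.I_im,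
        Complex.sub_re, Complex.add_re] at this ⊢
      linarith
    apply Complex.ext
    · simp only [Complex.conj_re]
      have := Complex.sub_re a b; simp only [Complex.sub_re] at h2; linarith
    · simp only [Complex.conj_im]
      simp only [Complex.add_im] at h1; linarith
  ext j k
  have hkey := key (Pi.single j 1) (Pi.single k 1)
  simp only [← Pi.single_star, star_one, Matrix.mulVec_single, mul_one,
    single_dotProduct, one_mul, MulOpposite.op_one, one_smul, Matrix.col_apply] at hkey
  simp only [Matrix.conjTranspose_apply, RCLike.star_def]
  rw [← hkey]

lemma hypPos_iff_psd {m : ℕ} (A : BCMat (Fin m) (Fin m)) :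
    HypPos A ↔ (midem1 A).PosSemidef ∧ (midem2 A).PosSemidef := by
  constructor
  · intro h
    have key1 : ∀ x : Fin m → ℂ, (star x ⬝ᵥ (midem1 A *ᵥ x)).im = 0 ∧
        0 ≤ (star x ⬝ᵥ (midem1 A *ᵥ x)).re := by
      intro x
      set c : Fin m → BC := fun k => (x k / 2, Complex.I * x k / 2) with hc
      have hcx : (fun k => idem1 (c k)) = x := by
        funext k
        simp only [hc, idem1]
        linear_combination (-(x k) / 2) * Complex.I_sq
      have hd := h c
      rw [inDplus, idem1_quadForm, hcx] at hd
      exact ⟨hd.1, hd.2.1⟩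
    have key2 : ∀ x : Fin m → ℂ, (star x ⬝ᵥ (midem2 A *ᵥ x)).im = 0 ∧
        0 ≤ (star x ⬝ᵥ (midem2 A *ᵥ x)).re := by
      intro x
      set c : Fin m → BC := fun k => (x k / 2, -Complex.I * x k / 2) with hc
      have hcx : (fun k => idem2 (c k)) = x := by
        funext k
        simp only [hc, idem2]
        linear_combination (-(x k) / 2) * Complex.I_sq
      have hd := h c
      rw [inDplus, idem2_quadForm, hcx] at hd
      exact ⟨hd.2.2.1, hd.2.2.2⟩
    refine ⟨.of_dotProduct_mulVec_nonneg (hermitian_of_im_zero _ fun x => (key1 x).1) fun x => ?_,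
            .of_dotProduct_mulVec_nonneg (hermitian_of_im_zero _ fun x => (key2 x).1) fun x => ?_⟩
    · rw [Complex.le_def]
      exact ⟨by simpa using (key1 x).2, by simpa using ((key1 x).1).symm⟩
    · rw [Complex.le_def]
      exact ⟨by simpa using (key2 x).2, by simpa using ((key2 x).1).symm⟩
  · rintro ⟨h1, h2⟩ c
    have q1 := h1.dotProduct_mulVec_nonneg (fun k => idem1 (c k))
    have q2 := h2.dotProduct_mulVec_nonneg (fun k => idem2 (c k))
    rw [Complex.le_def] at q1 q2
    rw [inDplus, idem1_quadForm, idem2_quadForm]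
    exact ⟨q1.2.symm.trans (by simp), by simpa using q1.1, q2.2.symm.trans (by simp),
      by simpa using q2.1⟩

lemma bcmat_ext {m : ℕ} {A B : BCMat (Fin m) (Fin m)}
    (h1 : midem1 A = midem1 B) (h2 : midem2 A = midem2 B) : A = B := by
  have e1 : ∀ j k, A.1 j k - Complex.I * A.2 j k = B.1 j k - Complex.I * B.2 j k := by
    intro j k
    have := congrFun (congrFun h1 j) k
    simpa [midem1, Matrix.sub_apply, Matrix.smul_apply] using this
  have e2 : ∀ j k, A.1 j k + Complex.I * A.2 j k = B.1 j k + Complex.I * B.2 j k := by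
    intro j k
    have := congrFun (congrFun h2 j) k
    simpa [midem2, Matrix.add_apply, Matrix.smul_apply] using this
  apply Prod.ext
  · ext j k
    linear_combination (e1 j k + e2 j k) / 2
  · ext j k
    have : Complex.I * A.2 j k = Complex.I * B.2 j k := by
      linear_combination (e2 j k - e1 j k) / 2
    exact mul_left_cancel₀ Complex.I_ne_zero this

lemma midem1_sum {m r : ℕ} (f : Fin r → BCMat (Fin m) (Fin m)) :
    midem1 (∑ i, f i) = ∑ i, midem1 (f i) := by
  simp only [midem1, Prod.fst_sum, Prod.snd_sum, Finset.smul_sum, Finset.sum_sub_distrib]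

lemma midem2_sum {m r : ℕ} (f : Fin r → BCMat (Fin m) (Fin m)) :
    midem2 (∑ i, f i) = ∑ i, midem2 (f i) := by
  simp only [midem2, Prod.fst_sum, Prod.snd_sum, Finset.smul_sum, Finset.sum_add_distrib]

lemma midem1_bcOuter {m : ℕ} (a : Fin m → BC) (j k : Fin m) :
    midem1 (bcOuter a) j k = idem1 (a j) * (starRingEnd ℂ) (idem1 (a k)) := by
  have h : midem1 (bcOuter a) j k = idem1 (bcMul (a j) (bcStar (a k))) := by
    simp [midem1, bcOuter, idem1, Matrix.sub_apply, Matrix.smul_apply]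
  rw [h, idem1_bcMul, idem1_bcStar]

lemma midem2_bcOuter {m : ℕ} (a : Fin m → BC) (j k : Fin m) :
    midem2 (bcOuter a) j k = idem2 (a j) * (starRingEnd ℂ) (idem2 (a k)) := by
  have h : midem2 (bcOuter a) j k = idem2 (bcMul (a j) (bcStar (a k))) := by
    simp [midem2, bcOuter, idem2, Matrix.add_apply, Matrix.smul_apply]
  rw [h, idem2_bcMul, idem2_bcStar]

lemma idem1_bcDinner {m : ℕ} (X Y : Fin m → BC) :
    idem1 (bcDinner X Y) = ∑ k, (starRingEnd ℂ) (idem1 (X k)) * idem1 (Y k) := by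
  rw [bcDinner, idem1_sum]
  simp only [idem1_bcMul, idem1_bcStar]

lemma idem2_bcDinner {m : ℕ} (X Y : Fin m → BC) :
    idem2 (bcDinner X Y) = ∑ k, (starRingEnd ℂ) (idem2 (X k)) * idem2 (Y k) := by
  rw [bcDinner, idem2_sum]
  simp only [idem2_bcMul, idem2_bcStar]

lemma psd_outer {m : ℕ} (u : Fin m → ℂ) :
    (Matrix.of fun j k => u j * (starRingEnd ℂ) (u k) : Matrix (Fin m) (Fin m) ℂ).PosSemidef := by
  have h : (Matrix.of fun j k => u j * (starRingEnd ℂ) (u k) : Matrix (Fin m) (Fin m) ℂ) =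
      (Matrix.of fun (_ : Fin 1) k => (starRingEnd ℂ) (u k))ᴴ *
        (Matrix.of fun (_ : Fin 1) k => (starRingEnd ℂ) (u k)) := by
    ext j k
    simp [Matrix.mul_apply, Fin.sum_univ_one, Matrix.conjTranspose_apply]
  rw [h]
  exact Matrix.posSemidef_conjTranspose_mul_self _

/-- `A` is hyperbolic positive iff `A = Σᵢ aᵢ·(aᵢ*)ᵗ` for some
bicomplex vectors `a₁,…,a_r`, which may be chosen pairwise orthogonal with
respect to the `𝔻`-valued inner product. -/
theorem hypPos_iff_sum_outer {n : ℕ} (A : BCMat (Fin n) (Fin n)) :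
    HypPos A ↔
      ∃ (r : ℕ) (a : Fin r → (Fin n → BC)),
        (∀ i j : Fin r, i ≠ j → bcDinner (a i) (a j) = ((0 : ℂ), (0 : ℂ))) ∧
        A = ∑ i, bcOuter (a i) := by
  rw [hypPos_iff_psd]
  constructor
  · rintro ⟨h1, h2⟩
    obtain ⟨u, huo, hu⟩ := psd_decomp h1
    obtain ⟨v, hvo, hv⟩ := psd_decomp h2
    set a : Fin n → Fin n → BC := fun i k =>
      ((u i k + v i k) / 2, Complex.I * (u i k - v i k) / 2) with ha
    have hai1 : ∀ i k, idem1 (a i k) = u i k := by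
      intro i k; simp only [ha, idem1]
      linear_combination (-(u i k - v i k) / 2) * Complex.I_sq
    have hai2 : ∀ i k, idem2 (a i k) = v i k := by
      intro i k; simp only [ha, idem2]
      linear_combination ((u i k - v i k) / 2) * Complex.I_sq
    refine ⟨n, a, ?_, ?_⟩
    · intro i j hij
      apply bc_eq_of_idem
      · rw [idem1_bcDinner]
        have h0 := huo i j hij
        simp only [dotProduct, Pi.star_apply, RCLike.star_def] at h0
        simp only [hai1]
        rw [h0]
        simp [idem1]
      · rw [idem2_bcDinner]
        have h0 := hvo i j hij
        simp only [dotProduct, Pi.star_apply, RCLike.star_def] at h0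
        simp only [hai2]
        rw [h0]
        simp [idem2]
    · apply bcmat_ext
      · rw [midem1_sum]
        ext j k
        rw [Matrix.sum_apply]
        simp only [midem1_bcOuter, hai1]
        exact hu j k
      · rw [midem2_sum]
        ext j k
        rw [Matrix.sum_apply]
        simp only [midem2_bcOuter, hai2]
        exact hv j k
  · rintro ⟨r, a, -, rfl⟩
    have hz : (0 : Matrix (Fin n) (Fin n) ℂ).PosSemidef :=
      ⟨Matrix.isHermitian_zero, fun x => by simp⟩
    constructor
    · rw [midem1_sum]
      refine Finset.sum_induction _ _ (fun x y hx hy => hx.add hy) hz ?_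
      intro i _
      have h : midem1 (bcOuter (a i)) =
          Matrix.of fun j k => idem1 (a i j) * (starRingEnd ℂ) (idem1 (a i k)) := by
        ext j k; rw [midem1_bcOuter]; rfl
      rw [h]; exact psd_outer _
    · rw [midem2_sum]
      refine Finset.sum_induction _ _ (fun x y hx hy => hx.add hy) hz ?_
      intro i _
      have h : midem2 (bcOuter (a i)) =
          Matrix.of fun j k => idem2 (a i j) * (starRingEnd ℂ) (idem2 (a i k)) := by
        ext j k; rw [midem2_bcOuter]; rfl
      rw [h]; exact psd_outer _


end
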